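/- A bipartite graph B with parts X and Y each of size n contains an r-regular spanning subgraph if and only if for all S ⊆ X and T ⊆ Y, e(S,T) ≥ r·(|S| + |T| − n), where the right-hand side is interpreted as an integer. -/

import Mathlib

set_option maxHeartbeats 1000000 in
/-- Gale–Ryser criterion: a bipartite graph with parts of size `n` contains an
`r`-regular spanning subgraph iff `e(S,T) ≥ r·(|S| + |T| − n)` (as integers)
for all `S ⊆ X`, `T ⊆ Y`. -/
theorem stmt_3 {X Y : Type*} [Fintype X] [Fintype Y] [DecidableEq X] [DecidableEq Y]
    (n : ℕ) (hX : Fintype.card X = n) (hY : Fintype.card Y = n)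
    (E : Finset (X × Y)) (r : ℕ) :
    (∃ H : Finset (X × Y), H ⊆ E ∧
        (∀ x : X, (H.filter (fun e => e.1 = x)).card = r) ∧
        (∀ y : Y, (H.filter (fun e => e.2 = y)).card = r)) ↔
    (∀ S : Finset X, ∀ T : Finset Y,
        (r : ℤ) * ((S.card : ℤ) + T.card - n) ≤
          ((E.filter (fun e => e.1 ∈ S ∧ e.2 ∈ T)).card : ℤ)) := by
  classical
  constructor
  · rintro ⟨H, hHE, hHx, hHy⟩ S T
    -- counting facts
    have h1 : (H.filter (fun e => e.1 ∈ S)).card = S.card * r := by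
      rw [Finset.card_eq_sum_card_fiberwise
        (f := fun e : X × Y => e.1) (s := H.filter (fun e => e.1 ∈ S)) (t := S) (fun e he => (Finset.mem_filter.mp he).2)]
      rw [Finset.sum_congr rfl (fun x hx => ?_), Finset.sum_const, smul_eq_mul]
      rw [Finset.filter_filter, ← hHx x]
      congr 1
      apply Finset.filter_congr
      intro e he
      show _ ↔ _
      constructor
      · exact fun h => h.2
      · exact fun h => ⟨h ▸ hx, h⟩
    have h2 : (H.filter (fun e => e.2 ∉ T)).card = Tᶜ.card * r := by
      rw [Finset.card_eq_sum_card_fiberwise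
        (f := fun e : X × Y => e.2) (s := H.filter (fun e => e.2 ∉ T)) (t := Tᶜ)
        (fun e he => Finset.mem_compl.mpr (Finset.mem_filter.mp he).2)]
      rw [Finset.sum_congr rfl (fun y hy => ?_), Finset.sum_const, smul_eq_mul]
      rw [Finset.filter_filter, ← hHy y]
      congr 1
      apply Finset.filter_congr
      intro e he
      show _ ↔ _
      constructor
      · exact fun h => h.2
      · exact fun h => ⟨h ▸ (Finset.mem_compl.mp hy), h⟩
    have hsplit : (H.filter (fun e => e.1 ∈ S ∧ e.2 ∈ T)).card
        + (H.filter (fun e => e.1 ∈ S ∧ e.2 ∉ T)).card = S.card * r := by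
      rw [← h1, ← Finset.filter_filter, ← Finset.filter_filter]
      exact Finset.card_filter_add_card_filter_not _
    have h4 : (H.filter (fun e => e.1 ∈ S ∧ e.2 ∈ T)).card
        ≤ (E.filter (fun e => e.1 ∈ S ∧ e.2 ∈ T)).card :=
      Finset.card_le_card (Finset.filter_subset_filter _ hHE)
    have h5 : (H.filter (fun e => e.1 ∈ S ∧ e.2 ∉ T)).card
        ≤ (H.filter (fun e => e.2 ∉ T)).card := by
      apply Finset.card_le_card
      intro e he
      rw [Finset.mem_filter] at he ⊢
      exact ⟨he.1, he.2.2⟩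
    have hn' : (T.card : ℤ) + Tᶜ.card = n := by
      rw [← hY]
      exact_mod_cast Finset.card_add_card_compl T
    have hmul : (r : ℤ) * n = r * T.card + r * Tᶜ.card := by rw [← hn']; ring
    have hsplit' : ((H.filter (fun e => e.1 ∈ S ∧ e.2 ∈ T)).card : ℤ)
        + (H.filter (fun e => e.1 ∈ S ∧ e.2 ∉ T)).card = S.card * r := by
      exact_mod_cast hsplit
    have h2' : ((H.filter (fun e => e.2 ∉ T)).card : ℤ) = Tᶜ.card * r := by
      exact_mod_cast h2
    have h4' : ((H.filter (fun e => e.1 ∈ S ∧ e.2 ∈ T)).card : ℤ)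
        ≤ (E.filter (fun e => e.1 ∈ S ∧ e.2 ∈ T)).card := by exact_mod_cast h4
    have h5' : ((H.filter (fun e => e.1 ∈ S ∧ e.2 ∉ T)).card : ℤ)
        ≤ (H.filter (fun e => e.2 ∉ T)).card := by exact_mod_cast h5
    nlinarith [hsplit', h2', h4', h5', hmul]
  · intro hcut
    -- trivial case r = 0
    rcases Nat.eq_zero_or_pos r with hr | hr
    · refine ⟨∅, by simp, ?_, ?_⟩ <;> intro v <;> simp [hr]
    -- the Tutte gadget
    set N : (X × Fin r) ⊕ {e : X × Y // e ∈ E} →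
        Finset ({e : X × Y // e ∈ E} ⊕ (Y × Fin r)) := fun v =>
      Sum.elim
        (fun p => (Finset.univ.filter
          (fun e : {e : X × Y // e ∈ E} => (e : X × Y).1 = p.1)).image Sum.inl)
        (fun e => insert (Sum.inl e : {e : X × Y // e ∈ E} ⊕ (Y × Fin r))
          ((Finset.univ : Finset (Fin r)).image
            (fun j => Sum.inr (((e : X × Y)).2, j)))) v
      with hN
    have hNl : ∀ p : X × Fin r, N (Sum.inl p) = (Finset.univ.filter
        (fun e : {e : X × Y // e ∈ E} => (e : X × Y).1 = p.1)).image Sum.inl := fun p => rfl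
    have hNr : ∀ e : {e : X × Y // e ∈ E}, N (Sum.inr e) = insert (Sum.inl e)
        ((Finset.univ : Finset (Fin r)).image
          (fun j => Sum.inr (((e : X × Y)).2, j))) := fun e => rfl
    have hall : ∀ W : Finset ((X × Fin r) ⊕ {e : X × Y // e ∈ E}),
        W.card ≤ (W.biUnion N).card := by
      intro W
      set S : Finset X :=
        Finset.univ.filter (fun x : X => ∃ i : Fin r, Sum.inl (x, i) ∈ W) with hS
      set F : Finset {e : X × Y // e ∈ E} :=
        Finset.univ.filter (fun e => Sum.inr e ∈ W) with hF
      set T : Finset Y := F.image (fun e : {e : X × Y // e ∈ E} => (e : X × Y).2) with hT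
      set W' : Finset ((X × Fin r) ⊕ {e : X × Y // e ∈ E}) :=
        ((S ×ˢ (Finset.univ : Finset (Fin r))).image Sum.inl) ∪ (F.image Sum.inr)
        with hW'
      have hWW' : W ⊆ W' := by
        intro v hv
        rcases v with p | e
        · apply Finset.mem_union_left
          refine Finset.mem_image.mpr ⟨p, ?_, rfl⟩
          rw [Finset.mem_product]
          exact ⟨Finset.mem_filter.mpr ⟨Finset.mem_univ _, ⟨p.2, hv⟩⟩, Finset.mem_univ _⟩
        · exact Finset.mem_union_right _
            (Finset.mem_image.mpr ⟨e, Finset.mem_filter.mpr ⟨Finset.mem_univ _, hv⟩, rfl⟩)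
      have hNsub : W'.biUnion N ⊆ W.biUnion N := by
        intro u hu
        rw [Finset.mem_biUnion] at hu ⊢
        obtain ⟨v, hv, hu⟩ := hu
        rw [hW', Finset.mem_union] at hv
        rcases hv with hv | hv
        · obtain ⟨p, hp, rfl⟩ := Finset.mem_image.mp hv
          rw [Finset.mem_product] at hp
          obtain ⟨i, hi⟩ := (Finset.mem_filter.mp hp.1).2
          refine ⟨Sum.inl (p.1, i), hi, ?_⟩
          rw [hNl] at hu ⊢
          exact hu
        · obtain ⟨e, he, rfl⟩ := Finset.mem_image.mp hv
          exact ⟨Sum.inr e, (Finset.mem_filter.mp he).2, hu⟩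
      -- the key subset of the neighborhood
      set D : Finset {e : X × Y // e ∈ E} :=
        Finset.univ.filter (fun e => (e : X × Y).1 ∈ S ∧ (e : X × Y).2 ∉ T) with hD
      have hDcard : D.card = (E.filter (fun e => e.1 ∈ S ∧ e.2 ∈ Tᶜ)).card := by
        rw [← Finset.card_image_of_injective D Subtype.val_injective]
        congr 1
        ext a
        simp only [Finset.mem_image, Finset.mem_filter, Finset.mem_univ, true_and,
          Finset.mem_compl, hD]
        constructor
        · rintro ⟨e, he, rfl⟩
          exact ⟨e.2, he.1, he.2⟩
        · rintro ⟨ha, h1, h2⟩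
          exact ⟨⟨a, ha⟩, ⟨h1, h2⟩, rfl⟩
      have hsub : (((D ∪ F).image Sum.inl)
            ∪ ((T ×ˢ (Finset.univ : Finset (Fin r))).image Sum.inr)
            : Finset ({e : X × Y // e ∈ E} ⊕ (Y × Fin r)))
          ⊆ W'.biUnion N := by
        intro u hu
        rw [Finset.mem_union] at hu
        rw [Finset.mem_biUnion]
        rcases hu with hu | hu
        · obtain ⟨e, he, rfl⟩ := Finset.mem_image.mp hu
          rw [Finset.mem_union] at he
          rcases he with he | he
          · -- e has left endpoint in S
            have hes : (e : X × Y).1 ∈ S := ((Finset.mem_filter.mp he).2).1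
            refine ⟨Sum.inl ((e : X × Y).1, ⟨0, hr⟩), ?_, ?_⟩
            · apply Finset.mem_union_left
              refine Finset.mem_image.mpr ⟨((e : X × Y).1, ⟨0, hr⟩), ?_, rfl⟩
              rw [Finset.mem_product]
              exact ⟨hes, Finset.mem_univ _⟩
            · rw [hNl]
              exact Finset.mem_image.mpr
                ⟨e, Finset.mem_filter.mpr ⟨Finset.mem_univ _, rfl⟩, rfl⟩
          · refine ⟨Sum.inr e,
              Finset.mem_union_right _ (Finset.mem_image.mpr ⟨e, he, rfl⟩), ?_⟩
            rw [hNr]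
            exact Finset.mem_insert_self _ _
        · obtain ⟨⟨y, j⟩, hyj, rfl⟩ := Finset.mem_image.mp hu
          rw [Finset.mem_product] at hyj
          obtain ⟨e, he, hey⟩ := Finset.mem_image.mp hyj.1
          refine ⟨Sum.inr e,
            Finset.mem_union_right _ (Finset.mem_image.mpr ⟨e, he, rfl⟩), ?_⟩
          rw [hNr]
          apply Finset.mem_insert_of_mem
          exact Finset.mem_image.mpr ⟨j, Finset.mem_univ _, by rw [hey]⟩
      have hdisjDF : Disjoint D F := by
        rw [Finset.disjoint_left]
        intro e heD heF
        exact ((Finset.mem_filter.mp heD).2).2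
          (Finset.mem_image.mpr ⟨e, heF, rfl⟩)
      -- cardinality computations
      have hW'card : W'.card = S.card * r + F.card := by
        have hdis : Disjoint
            (((S ×ˢ (Finset.univ : Finset (Fin r))).image Sum.inl)
              : Finset ((X × Fin r) ⊕ {e : X × Y // e ∈ E}))
            (F.image Sum.inr) := by
          rw [Finset.disjoint_left]
          rintro u hu hu'
          obtain ⟨p, _, rfl⟩ := Finset.mem_image.mp hu
          obtain ⟨e, _, h⟩ := Finset.mem_image.mp hu'
          nomatch h
        rw [hW', Finset.card_union_of_disjoint hdis,
          Finset.card_image_of_injective _ Sum.inl_injective,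
          Finset.card_image_of_injective _ Sum.inr_injective, Finset.card_product,
          Finset.card_univ, Fintype.card_fin]
      have hbig : (D ∪ F).card + T.card * r ≤ (W'.biUnion N).card := by
        calc (D ∪ F).card + T.card * r
            = ((((D ∪ F).image Sum.inl)
              ∪ ((T ×ˢ (Finset.univ : Finset (Fin r))).image Sum.inr)
              : Finset ({e : X × Y // e ∈ E} ⊕ (Y × Fin r)))).card := by
              have hdis : Disjoint
                  (((D ∪ F).image Sum.inl)
                    : Finset ({e : X × Y // e ∈ E} ⊕ (Y × Fin r)))
                  ((T ×ˢ (Finset.univ : Finset (Fin r))).image Sum.inr) := by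
                rw [Finset.disjoint_left]
                rintro u hu hu'
                obtain ⟨e, _, rfl⟩ := Finset.mem_image.mp hu
                obtain ⟨p, _, h⟩ := Finset.mem_image.mp hu'
                nomatch h
              rw [Finset.card_union_of_disjoint hdis,
                Finset.card_image_of_injective _ Sum.inl_injective,
                Finset.card_image_of_injective _ Sum.inr_injective, Finset.card_product,
                Finset.card_univ, Fintype.card_fin]
          _ ≤ (W'.biUnion N).card := Finset.card_le_card hsub
      have hDFcard : D.card + F.card = (D ∪ F).card :=
        (Finset.card_union_of_disjoint hdisjDF).symm
      -- apply the cut condition with S and Tᶜ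
      have hkey := hcut S Tᶜ
      have hTc : ((Tᶜ).card : ℤ) = (n : ℤ) - T.card := by
        have h0 := Finset.card_add_card_compl T
        rw [hY] at h0
        have h1 : (T.card : ℤ) + ((Tᶜ).card : ℤ) = (n : ℤ) := by exact_mod_cast h0
        linarith
      have hkey' : (r : ℤ) * S.card ≤ (D.card : ℤ) + r * T.card := by
        rw [hTc, ← hDcard] at hkey
        nlinarith [hkey]
      -- conclude Hall's condition
      have hfin : W'.card ≤ (W'.biUnion N).card := by
        rw [hW'card]
        have hbig2 : D.card + F.card + T.card * r ≤ (W'.biUnion N).card := by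
          rw [hDFcard]; exact hbig
        have hb : (D.card : ℤ) + F.card + T.card * r ≤ ((W'.biUnion N).card : ℤ) := by
          exact_mod_cast hbig2
        have goal' : ((S.card : ℤ) * r + F.card) ≤ ((W'.biUnion N).card : ℤ) := by
          nlinarith [hkey', hb]
        exact_mod_cast goal'
      calc W.card ≤ W'.card := Finset.card_le_card hWW'
        _ ≤ (W'.biUnion N).card := hfin
        _ ≤ (W.biUnion N).card := Finset.card_le_card hNsub
    -- apply Hall's theorem
    obtain ⟨f, hfinj, hfmem⟩ :=
      (Finset.all_card_le_biUnion_card_iff_exists_injective N).mp hall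
    -- f is bijective since |L| = |R|
    have hcard : Fintype.card ((X × Fin r) ⊕ {e : X × Y // e ∈ E})
        = Fintype.card ({e : X × Y // e ∈ E} ⊕ (Y × Fin r)) := by
      simp [Fintype.card_sum, Fintype.card_prod, Fintype.card_fin, hX, hY]
      omega
    have hfsurj : Function.Surjective f :=
      ((Fintype.bijective_iff_injective_and_card f).mpr ⟨hfinj, hcard⟩).surjective
    -- extract the matching of the X-copies
    have hg : ∀ p : X × Fin r, ∃ e : {e : X × Y // e ∈ E},
        (e : X × Y).1 = p.1 ∧ f (Sum.inl p) = Sum.inl e := by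
      intro p
      have h := hfmem (Sum.inl p)
      rw [hNl] at h
      obtain ⟨e, he, hfe⟩ := Finset.mem_image.mp h
      exact ⟨e, (Finset.mem_filter.mp he).2, hfe.symm⟩
    choose g hg1 hg2 using hg
    have hginj : Function.Injective g := by
      intro p p' h
      have : f (Sum.inl p) = f (Sum.inl p') := by rw [hg2, hg2, h]
      exact Sum.inl_injective (hfinj this)
    -- define the subgraph
    set H : Finset (X × Y) :=
      Finset.univ.image (fun p : X × Fin r => (g p : X × Y)) with hH
    have hHE : H ⊆ E := by
      intro a ha
      obtain ⟨p, _, rfl⟩ := Finset.mem_image.mp ha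
      exact (g p).2
    -- key characterizations
    have claim1 : ∀ e : {e : X × Y // e ∈ E},
        (∃ p, g p = e) ↔ f (Sum.inr e) ≠ Sum.inl e := by
      intro e
      constructor
      · rintro ⟨p, rfl⟩ hcon
        have : f (Sum.inr (g p)) = f (Sum.inl p) := by rw [hcon, hg2]
        nomatch hfinj this
      · intro hne
        obtain ⟨w, hw⟩ := hfsurj (Sum.inl e)
        rcases w with p | e'
        · exact ⟨p, Sum.inl_injective ((hg2 p).symm.trans hw)⟩
        · exfalso
          have h := hfmem (Sum.inr e')
          rw [hw, hNr] at h
          rcases Finset.mem_insert.mp h with h | h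
          · cases Sum.inl_injective h
            exact hne hw
          · obtain ⟨j, -, hj⟩ := Finset.mem_image.mp h
            nomatch hj
    have claim2 : ∀ e : {e : X × Y // e ∈ E}, (∃ p, g p = e) →
        ∃ j : Fin r, f (Sum.inr e) = Sum.inr ((e : X × Y).2, j) := by
      intro e he
      have hmem := hfmem (Sum.inr e)
      rw [hNr] at hmem
      rcases Finset.mem_insert.mp hmem with h | h
      · exact absurd h ((claim1 e).mp he)
      · obtain ⟨j, -, hj⟩ := Finset.mem_image.mp h
        exact ⟨j, hj.symm⟩
    -- injectivity of val ∘ g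
    have hvg_inj : Function.Injective (fun p : X × Fin r => (g p : X × Y)) :=
      fun p p' h => hginj (Subtype.ext h)
    refine ⟨H, hHE, ?_, ?_⟩
    · -- X-degrees
      intro x
      rw [hH, Finset.filter_image]
      rw [Finset.card_image_of_injective _ hvg_inj]
      have h1 : (Finset.univ.filter (fun p : X × Fin r => ((g p : X × Y)).1 = x))
          = Finset.univ.filter (fun p : X × Fin r => p.1 = x) := by
        apply Finset.filter_congr
        intro p _
        rw [hg1 p]
      rw [h1]
      have h2 : (Finset.univ.filter (fun p : X × Fin r => p.1 = x))
          = ({x} ×ˢ (Finset.univ : Finset (Fin r))) := by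
        ext p
        simp only [Finset.mem_filter, Finset.mem_univ, true_and, Finset.mem_product,
          Finset.mem_singleton]
        constructor
        · exact fun h => ⟨h, trivial⟩
        · exact fun h => h.1
      rw [h2, Finset.card_product, Finset.card_singleton, Finset.card_univ,
        Fintype.card_fin, one_mul]
    · -- Y-degrees
      intro y
      set K : Finset {e : X × Y // e ∈ E} :=
        Finset.univ.filter (fun e => (∃ p, g p = e) ∧ (e : X × Y).2 = y) with hK
      have hHK : (H.filter (fun e => e.2 = y)) = K.image Subtype.val := by
        ext a
        simp only [Finset.mem_filter, Finset.mem_image, hH, hK, Finset.mem_univ, true_and]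
        constructor
        · rintro ⟨⟨p, rfl⟩, hy2⟩
          exact ⟨g p, ⟨⟨p, rfl⟩, hy2⟩, rfl⟩
        · rintro ⟨e, ⟨⟨p, rfl⟩, hy2⟩, rfl⟩
          exact ⟨⟨p, rfl⟩, hy2⟩
      rw [hHK, Finset.card_image_of_injective _ Subtype.val_injective]
      -- K maps bijectively onto {y} × Fin r via f ∘ inr
      have himg : K.image (fun e => f (Sum.inr e))
          = (({y} ×ˢ (Finset.univ : Finset (Fin r))).image Sum.inr) := by
        ext u
        simp only [Finset.mem_image]
        constructor
        · rintro ⟨e, he, rfl⟩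
          rw [hK, Finset.mem_filter] at he
          obtain ⟨-, hex, hey⟩ := he
          obtain ⟨j, hj⟩ := claim2 e hex
          refine ⟨(y, j), ?_, ?_⟩
          · rw [Finset.mem_product]
            exact ⟨Finset.mem_singleton_self y, Finset.mem_univ _⟩
          · rw [hj, hey]
        · rintro ⟨⟨y', j⟩, hq, rfl⟩
          rw [Finset.mem_product, Finset.mem_singleton] at hq
          obtain ⟨rfl, -⟩ := hq
          obtain ⟨w, hw⟩ := hfsurj (Sum.inr (y', j))
          rcases w with p | e
          · rw [hg2 p] at hw
            exact absurd hw (by simp)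
          · have hmem := hfmem (Sum.inr e)
            rw [hw, hNr] at hmem
            rcases Finset.mem_insert.mp hmem with h | h
            · exact absurd h (by simp)
            · obtain ⟨j', -, hj'⟩ := Finset.mem_image.mp h
              have h2 := Sum.inr_injective hj'
              have hye : (e : X × Y).2 = y' := (Prod.ext_iff.mp h2).1
              have hex : ∃ p, g p = e := (claim1 e).mpr (by rw [hw]; simp)
              refine ⟨e, ?_, hw⟩
              rw [hK, Finset.mem_filter]
              exact ⟨Finset.mem_univ _, hex, hye⟩
      have hinjf : Function.Injective
          (fun e : {e : X × Y // e ∈ E} => f (Sum.inr e)) :=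
        fun a b h => Sum.inr_injective (hfinj h)
      have hKcard := congrArg Finset.card himg
      rw [Finset.card_image_of_injective _ hinjf,
        Finset.card_image_of_injective _ Sum.inr_injective, Finset.card_product,
        Finset.card_singleton, Finset.card_univ, Fintype.card_fin, one_mul] at hKcard
      exact hKcard
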